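/- For every real μ ≠ 0, the function T ↦ (2/(μ²·T)) · ∫_0^T F(2/(μ²·x)) · (1/x) dx is nonnegative for all T > 0 and is O(log²(μ²T)/(μ²T)) as T → +∞. -/

import Mathlib

open MeasureTheory Real Filter Asymptotics
open Set

/-- The exponential integral `E1 x = ∫_x^∞ e^{-t}/t dt`. -/
noncomputable def E1 (x : ℝ) : ℝ := ∫ t in Set.Ioi x, Real.exp (-t) / t

/-- `F x = e^x * E1 x`. -/
noncomputable def F (x : ℝ) : ℝ := Real.exp x * E1 x

lemma h_meas : Measurable (fun t : ℝ => Real.exp (-t) / t) :=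
  (Real.measurable_exp.comp measurable_neg).div measurable_id

lemma h_integrableOn {c : ℝ} (hc : 0 < c) :
    IntegrableOn (fun t : ℝ => Real.exp (-t) / t) (Set.Ioi c) := by
  have hg : IntegrableOn (fun t : ℝ => Real.exp (-t) / c) (Set.Ioi c) := by
    have := (exp_neg_integrableOn_Ioi c (b := 1) one_pos)
    simpa [IntegrableOn, div_eq_mul_inv, neg_mul, one_mul] using this.mul_const c⁻¹
  refine hg.integrable.mono' (h_meas.aestronglyMeasurable) ?_
  filter_upwards [ae_restrict_mem measurableSet_Ioi] with t ht
  have htc : c < t := ht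
  rw [Real.norm_eq_abs, abs_of_nonneg (div_pos (Real.exp_pos _) (hc.trans htc)).le]
  exact div_le_div_of_nonneg_left (Real.exp_pos _).le hc htc.le -- keep

lemma E1_nonneg {y : ℝ} (hy : 0 ≤ y) : 0 ≤ E1 y := by
  refine setIntegral_nonneg measurableSet_Ioi fun t ht => ?_
  have : 0 < t := lt_of_le_of_lt hy ht
  positivity

lemma E1_le {y : ℝ} (hy : 0 < y) : E1 y ≤ Real.exp (-y) / y := by
  have : E1 y ≤ ∫ t in Set.Ioi y, Real.exp (-t) / y := by
    refine setIntegral_mono_on (h_integrableOn hy) ?_ measurableSet_Ioi fun t ht => ?_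
    · have := (exp_neg_integrableOn_Ioi y (b := 1) one_pos)
      simpa [IntegrableOn, div_eq_mul_inv, neg_mul, one_mul] using this.mul_const y⁻¹
    · exact div_le_div_of_nonneg_left (Real.exp_pos _).le hy (le_of_lt ht)
  calc E1 y ≤ ∫ t in Set.Ioi y, Real.exp (-t) / y := this
    _ = (∫ t in Set.Ioi y, Real.exp (-t)) / y := by rw [integral_div]
    _ = Real.exp (-y) / y := by rw [integral_exp_neg_Ioi]

lemma F_le_inv {y : ℝ} (hy : 0 < y) : F y ≤ 1 / y := by
  have := E1_le hy
  have h2 : Real.exp y * E1 y ≤ Real.exp y * (Real.exp (-y) / y) :=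
    mul_le_mul_of_nonneg_left this (Real.exp_pos _).le
  calc F y ≤ Real.exp y * (Real.exp (-y) / y) := h2
    _ = 1 / y := by rw [← mul_div_assoc, ← Real.exp_add]; simp

lemma F_nonneg {y : ℝ} (hy : 0 ≤ y) : 0 ≤ F y :=
  mul_nonneg (Real.exp_pos _).le (E1_nonneg hy)

lemma E1_split {y z : ℝ} (hy : 0 < y) (hyz : y ≤ z) :
    E1 y = (∫ t in Set.Ioc y z, Real.exp (-t) / t) + E1 z := by
  have hz : 0 < z := hy.trans_le hyz
  rw [E1, E1, ← Set.Ioc_union_Ioi_eq_Ioi hyz]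
  exact setIntegral_union Set.Ioc_disjoint_Ioi_same measurableSet_Ioi
    ((h_integrableOn hy).mono_set (by rw [← Set.Ioc_union_Ioi_eq_Ioi hyz]; exact Set.subset_union_left))
    (h_integrableOn hz)

lemma E1_le_one_sub_log {y : ℝ} (hy : 0 < y) (hy1 : y ≤ 1) : E1 y ≤ 1 - Real.log y := by
  rw [E1_split hy hy1]
  have h1 : E1 1 ≤ 1 := by
    calc E1 1 ≤ Real.exp (-1) / 1 := E1_le one_pos
      _ ≤ 1 := by rw [div_one]; exact Real.exp_le_one_iff.mpr (by norm_num)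
  have h2 : (∫ t in Set.Ioc y 1, Real.exp (-t) / t) ≤ ∫ t in Set.Ioc y 1, 1 / t := by
    refine setIntegral_mono_on
      ((h_integrableOn hy).mono_set Set.Ioc_subset_Ioi_self) ?_ measurableSet_Ioc fun t ht => ?_
    · refine (ContinuousOn.integrableOn_compact isCompact_Icc ?_).mono_set Set.Ioc_subset_Icc_self
      exact ContinuousOn.div continuousOn_const continuousOn_id fun t ht => ne_of_gt (hy.trans_le ht.1)
    · have ht0 : 0 < t := hy.trans ht.1
      have hle : Real.exp (-t) ≤ 1 := Real.exp_le_one_iff.mpr (by linarith [ht.1])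
      gcongr
  have h3 : (∫ t in Set.Ioc y 1, (1:ℝ) / t) = - Real.log y := by
    rw [← intervalIntegral.integral_of_le hy1]
    rw [integral_one_div (by simp [Set.uIcc_of_le hy1]; exact hy)]
    simp [Real.log_div, hy.ne']
  linarith [h3 ▸ h2]

lemma E1_continuousOn : ContinuousOn E1 (Set.Ioi 0) := by
  intro y0 hy0
  refine ContinuousAt.continuousWithinAt ?_
  have hy0' : (0:ℝ) < y0 := hy0
  set c := y0 / 2 with hc
  have hcpos : 0 < c := by positivity
  have hcy : c < y0 := by simp [hc]; linarith
  have hint : IntervalIntegrable (fun t => Real.exp (-t) / t) volume c y0 := by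
    refine (ContinuousOn.intervalIntegrable ?_)
    refine ContinuousOn.div ((Real.continuous_exp.comp continuous_neg).continuousOn) continuousOn_id fun t ht => ?_
    rw [Set.uIcc_of_le hcy.le] at ht
    exact ne_of_gt (hcpos.trans_le ht.1)
  have hderiv : HasDerivAt (fun u => ∫ t in c..u, Real.exp (-t) / t) (Real.exp (-y0) / y0) y0 := by
    refine intervalIntegral.integral_hasDerivAt_right hint
      (h_meas.stronglyMeasurable.stronglyMeasurableAtFilter) ?_
    exact ContinuousAt.div (by fun_prop) continuousAt_id (ne_of_gt hy0')
  have hcont : ContinuousAt (fun u => E1 c - ∫ t in c..u, Real.exp (-t) / t) y0 :=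
    (continuousAt_const.sub hderiv.continuousAt)
  refine hcont.congr ?_
  filter_upwards [eventually_gt_nhds hcy] with y hy
  have : E1 c = (∫ t in Set.Ioc c y, Real.exp (-t) / t) + E1 y := E1_split hcpos hy.le
  rw [intervalIntegral.integral_of_le hy.le]
  linarith [this]

lemma F_continuousOn : ContinuousOn F (Set.Ioi 0) :=
  (Real.continuous_exp.continuousOn).mul E1_continuousOn

lemma f_nonneg {m x : ℝ} (hm : 0 < m) (hx : 0 ≤ x) : 0 ≤ F (2 / (m * x)) * (1 / x) := by
  rcases eq_or_lt_of_le hx with rfl | hx'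
  · simp
  · exact mul_nonneg (F_nonneg (by positivity)) (by positivity)

lemma f_le {m x : ℝ} (hm : 0 < m) (hx : 0 ≤ x) : F (2 / (m * x)) * (1 / x) ≤ m / 2 := by
  rcases eq_or_lt_of_le hx with rfl | hx'
  · simp; positivity
  · have hy : 0 < 2 / (m * x) := by positivity
    have h1 : F (2 / (m * x)) ≤ 1 / (2 / (m * x)) := F_le_inv hy
    have h2 : (1 : ℝ) / (2 / (m * x)) = m * x / 2 := by field_simp
    calc F (2 / (m * x)) * (1 / x) ≤ (m * x / 2) * (1 / x) := by
          rw [← h2]; exact mul_le_mul_of_nonneg_right h1 (by positivity)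
      _ = m / 2 := by field_simp

lemma f_contOn {m : ℝ} (hm : 0 < m) :
    ContinuousOn (fun x => F (2 / (m * x)) * (1 / x)) (Set.Ioi 0) := by
  refine ContinuousOn.mul ?_ (ContinuousOn.div continuousOn_const continuousOn_id
    fun x hx => ne_of_gt hx)
  refine F_continuousOn.comp (ContinuousOn.div continuousOn_const
    (continuousOn_const.mul continuousOn_id) fun x hx =>
      ne_of_gt (mul_pos hm (Set.mem_Ioi.mp hx))) ?_
  intro x hx
  have : (0:ℝ) < x := hx
  exact Set.mem_Ioi.mpr (by positivity)

lemma f_integrableOn {m T : ℝ} (hm : 0 < m) (hT : 0 < T) :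
    IntegrableOn (fun x => F (2 / (m * x)) * (1 / x)) (Set.Ioc 0 T) := by
  have hmeas : AEStronglyMeasurable (fun x => F (2 / (m * x)) * (1 / x))
      (volume.restrict (Set.Ioc 0 T)) :=
    ((f_contOn hm).mono Set.Ioc_subset_Ioi_self).aestronglyMeasurable measurableSet_Ioc
  refine Integrable.mono' (g := fun _ => m / 2)
    (integrableOn_const measure_Ioc_lt_top.ne) hmeas ?_
  filter_upwards [ae_restrict_mem measurableSet_Ioc] with x hx
  rw [Real.norm_eq_abs, abs_of_nonneg (f_nonneg hm hx.1.le)]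
  exact f_le hm hx.1.le

lemma G_hasDeriv {m : ℝ} (hm : 0 < m) {x : ℝ} (hx : 0 < x) :
    HasDerivAt (fun x => Real.exp 1 * (Real.log (m * x / 2) + (Real.log (m * x / 2))^2 / 2))
      (Real.exp 1 * (1 + Real.log (m * x / 2)) / x) x := by
  have hu : HasDerivAt (fun x : ℝ => m * x / 2) (m / 2) x := by
    simpa using ((hasDerivAt_id x).const_mul m).div_const 2
  have hup : 0 < m * x / 2 := by positivity
  have hl : HasDerivAt (fun x => Real.log (m * x / 2)) ((m / 2) / (m * x / 2)) x :=
    hu.log (ne_of_gt hup)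
  have hl' : (m / 2) / (m * x / 2) = 1 / x := by field_simp
  rw [hl'] at hl
  have hsum := (hl.add ((hl.pow 2).div_const 2)).const_mul (Real.exp 1)
  refine hsum.congr_deriv ?_
  push_cast
  ring

lemma f_le_g {m x : ℝ} (hm : 0 < m) (hx : 0 < x) (hax : 2 / m ≤ x) :
    F (2 / (m * x)) * (1 / x) ≤ Real.exp 1 * (1 + Real.log (m * x / 2)) / x := by
  set y := 2 / (m * x) with hy
  have hy0 : 0 < y := by positivity
  have hy1 : y ≤ 1 := by
    rw [hy, div_le_one (by positivity)]
    calc (2:ℝ) = m * (2 / m) := by field_simp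
      _ ≤ m * x := by exact mul_le_mul_of_nonneg_left hax hm.le
  have hlogy : Real.log y = -Real.log (m * x / 2) := by
    rw [hy]
    rw [show 2 / (m * x) = (m * x / 2)⁻¹ by field_simp, Real.log_inv]
  have hE : E1 y ≤ 1 - Real.log y := E1_le_one_sub_log hy0 hy1
  have h1 : F y ≤ Real.exp 1 * (1 - Real.log y) := by
    refine mul_le_mul (Real.exp_le_exp.mpr hy1) hE (E1_nonneg hy0.le) (Real.exp_pos _).le
  have h2 : (1:ℝ) - Real.log y = 1 + Real.log (m * x / 2) := by rw [hlogy]; ring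
  rw [h2] at h1
  calc F y * (1 / x) ≤ (Real.exp 1 * (1 + Real.log (m * x / 2))) * (1 / x) := by
        refine mul_le_mul_of_nonneg_right h1 (by positivity)
    _ = Real.exp 1 * (1 + Real.log (m * x / 2)) / x := by ring

set_option maxHeartbeats 1000000

theorem lowerbound_tail_term_nonneg_and_isBigO (μ : ℝ) (hμ : μ ≠ 0) :
    (∀ T : ℝ, 0 < T →
      0 ≤ (2 / (μ ^ 2 * T)) * (∫ x in (0 : ℝ)..T, F (2 / (μ ^ 2 * x)) * (1 / x))) ∧
      (fun T : ℝ => (2 / (μ ^ 2 * T)) * (∫ x in (0 : ℝ)..T, F (2 / (μ ^ 2 * x)) * (1 / x)))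
        =O[atTop] (fun T : ℝ => (Real.log (μ ^ 2 * T)) ^ 2 / (μ ^ 2 * T)) := by
  have hm : 0 < μ ^ 2 := by positivity
  set m := μ ^ 2 with hmdef
  have hnn : ∀ T : ℝ, 0 < T →
      0 ≤ (2 / (m * T)) * (∫ x in (0 : ℝ)..T, F (2 / (m * x)) * (1 / x)) := by
    intro T hT
    refine mul_nonneg (by positivity) ?_
    exact intervalIntegral.integral_nonneg hT.le fun x hx => f_nonneg hm hx.1
  refine ⟨hnn, ?_⟩
  rw [isBigO_iff]
  refine ⟨8, ?_⟩
  have ha : (0:ℝ) < 2 / m := by positivity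
  filter_upwards [eventually_ge_atTop ((2 / m) * Real.exp 2)] with T hTa
  set a := 2 / m with hadef
  have hexp2 : (1:ℝ) ≤ Real.exp 2 := by
    rw [show (1:ℝ) = Real.exp 0 by simp]; exact Real.exp_le_exp.mpr (by norm_num)
  have haT : a ≤ T := le_trans (le_mul_of_one_le_right ha.le hexp2) hTa
  have hT0 : 0 < T := lt_of_lt_of_le ha haT
  set L := Real.log (m * T / 2) with hLdef
  have hmT2 : Real.exp 2 ≤ m * T / 2 := by
    have h2 := mul_le_mul_of_nonneg_left hTa (by positivity : (0:ℝ) ≤ m / 2)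
    calc Real.exp 2 = (m / 2) * ((2 / m) * Real.exp 2) := by field_simp
      _ ≤ (m / 2) * T := h2
      _ = m * T / 2 := by ring
  have hL2 : 2 ≤ L := by
    calc (2:ℝ) = Real.log (Real.exp 2) := (Real.log_exp 2).symm
      _ ≤ L := (Real.log_le_log_iff (Real.exp_pos _) (by positivity)).mpr hmT2
  set s := Real.log (m * T) with hsdef
  have hLs : L ≤ s := by
    refine (Real.log_le_log_iff (by positivity) (by positivity)).mpr (by linarith [mul_pos hm hT0])
  have hs2 : 2 ≤ s := hL2.trans hLs
  -- integrability
  have hi1 : IntervalIntegrable (fun x => F (2 / (m * x)) * (1 / x)) volume 0 a := by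
    rw [intervalIntegrable_iff_integrableOn_Ioc_of_le ha.le]
    exact f_integrableOn hm ha
  have hi2 : IntervalIntegrable (fun x => F (2 / (m * x)) * (1 / x)) volume a T := by
    rw [intervalIntegrable_iff_integrableOn_Ioc_of_le haT]
    exact (f_integrableOn hm hT0).mono_set (Set.Ioc_subset_Ioc ha.le le_rfl)
  have hsplit : (∫ x in (0:ℝ)..T, F (2 / (m * x)) * (1 / x))
      = (∫ x in (0:ℝ)..a, F (2 / (m * x)) * (1 / x))
        + ∫ x in a..T, F (2 / (m * x)) * (1 / x) :=
    (intervalIntegral.integral_add_adjacent_intervals hi1 hi2).symm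
  have hb1 : (∫ x in (0:ℝ)..a, F (2 / (m * x)) * (1 / x)) ≤ 1 := by
    calc (∫ x in (0:ℝ)..a, F (2 / (m * x)) * (1 / x)) ≤ ∫ _ in (0:ℝ)..a, m / 2 :=
        intervalIntegral.integral_mono_on ha.le hi1 intervalIntegrable_const
          fun x hx => f_le hm hx.1
      _ = (m / 2) * a := by simp [intervalIntegral.integral_const]; ring
      _ = 1 := by rw [hadef]; field_simp
  have hgi : IntervalIntegrable (fun x => Real.exp 1 * (1 + Real.log (m * x / 2)) / x)
      volume a T := by
    refine ContinuousOn.intervalIntegrable ?_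
    refine ContinuousOn.div ?_ continuousOn_id fun x hx => ?_
    · refine continuousOn_const.mul (continuousOn_const.add ?_)
      refine (Real.continuousOn_log.comp ((continuousOn_const.mul continuousOn_id).div_const 2)
        fun x hx => ?_)
      rw [Set.uIcc_of_le haT] at hx
      have : 0 < x := lt_of_lt_of_le ha hx.1
      simp only [Set.mem_compl_iff, Set.mem_singleton_iff]
      positivity
    · rw [Set.uIcc_of_le haT] at hx
      exact ne_of_gt (lt_of_lt_of_le ha hx.1)
  have hb2 : (∫ x in a..T, F (2 / (m * x)) * (1 / x))
      ≤ ∫ x in a..T, Real.exp 1 * (1 + Real.log (m * x / 2)) / x := by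
    refine intervalIntegral.integral_mono_on haT hi2 hgi fun x hx => ?_
    exact f_le_g hm (lt_of_lt_of_le ha hx.1) hx.1
  have hftc : (∫ x in a..T, Real.exp 1 * (1 + Real.log (m * x / 2)) / x)
      = (Real.exp 1 * (Real.log (m * T / 2) + (Real.log (m * T / 2))^2 / 2))
        - (Real.exp 1 * (Real.log (m * a / 2) + (Real.log (m * a / 2))^2 / 2)) := by
    refine intervalIntegral.integral_eq_sub_of_hasDerivAt
      (f := fun x => Real.exp 1 * (Real.log (m * x / 2) + (Real.log (m * x / 2))^2 / 2)) (fun x hx => ?_) hgi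
    rw [Set.uIcc_of_le haT] at hx
    exact G_hasDeriv hm (lt_of_lt_of_le ha hx.1)
  have hma : m * a / 2 = 1 := by rw [hadef]; field_simp
  rw [hma, Real.log_one] at hftc
  simp only [zero_pow, ne_eq, OfNat.ofNat_ne_zero, not_false_iff] at hftc
  have hIle : (∫ x in (0:ℝ)..T, F (2 / (m * x)) * (1 / x)) ≤ 1 + Real.exp 1 * (L + L^2 / 2) := by
    rw [hsplit]
    have := hb2.trans_eq hftc
    simp only [← hLdef] at this
    have h0 : Real.exp 1 * ((0:ℝ) + 0^2/2) = 0 := by norm_num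
    nlinarith [this, hb1]
  have hIge : 0 ≤ (∫ x in (0:ℝ)..T, F (2 / (m * x)) * (1 / x)) :=
    intervalIntegral.integral_nonneg hT0.le fun x hx => f_nonneg hm hx.1
  have he : Real.exp 1 ≤ 2.7182818286 := Real.exp_one_lt_d9.le
  have he0 : 0 < Real.exp 1 := Real.exp_pos 1
  have hbound : (∫ x in (0:ℝ)..T, F (2 / (m * x)) * (1 / x)) ≤ 4 * s ^ 2 := by
    have hL0 : 0 ≤ L := by linarith
    have h1 : (1:ℝ) ≤ s^2 / 4 := by nlinarith
    have h2 : L ≤ s^2 / 2 := by nlinarith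
    have h3 : L^2 ≤ s^2 := by nlinarith
    nlinarith [hIle]
  have hmT0 : 0 < m * T := mul_pos hm hT0
  rw [Real.norm_eq_abs, Real.norm_eq_abs,
    abs_of_nonneg (hnn T hT0), abs_of_nonneg (by positivity : (0:ℝ) ≤ s ^ 2 / (m * T))]
  calc (2 / (m * T)) * (∫ x in (0:ℝ)..T, F (2 / (m * x)) * (1 / x))
      ≤ (2 / (m * T)) * (4 * s ^ 2) := by
        exact mul_le_mul_of_nonneg_left hbound (by positivity)
    _ = 8 * (s ^ 2 / (m * T)) := by field_simp; ring
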